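/- Let ρ₁ ∈ (-1, 0), p₁ > p₂ > 0 with 2p₁ + p₂ = 1, and define h(t₂) = p₂·Φ(t₂) + p₁·Φ_{-ρ₁}(t₂, -t₂), the soundness when t₁ = -∞. Then h is maximized at t* = √((1+ρ₁)/(1-ρ₁))·Φ⁻¹((p₁+p₂)/(2p₁)); namely h'(t₂) > 0 for t₂ < t* and h'(t₂) < 0 for t₂ > t*. -/

import Mathlib

open MeasureTheory Set Real


/-- Standard normal CDF. -/
noncomputable def stdNormalCDF (t : ℝ) : ℝ :=
  ∫ x in Set.Iic t, (1 / Real.sqrt (2 * Real.pi)) * Real.exp (-x ^ 2 / 2)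

/-- Standard bivariate normal density with correlation `ρ`. -/
noncomputable def biNormalDensity (ρ x y : ℝ) : ℝ :=
  (1 / (2 * Real.pi * Real.sqrt (1 - ρ ^ 2))) *
    Real.exp (-(x ^ 2 - 2 * ρ * x * y + y ^ 2) / (2 * (1 - ρ ^ 2)))

/-- `Φ_ρ(t₁, t₂) = P[X ≤ t₁ ∧ Y ≤ t₂]` for jointly standard Gaussian `(X, Y)` with
correlation `ρ`.  For `ρ = ±1` the (degenerate) joint distribution gives the
indicated closed forms; for `ρ ∈ (-1, 1)` it is the double integral of the density. -/
noncomputable def biNormalCDF (ρ t₁ t₂ : ℝ) : ℝ :=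
  if ρ = 1 then stdNormalCDF (min t₁ t₂)
  else if ρ = -1 then max (stdNormalCDF t₁ + stdNormalCDF t₂ - 1) 0
  else ∫ x in Set.Iic t₁, ∫ y in Set.Iic t₂, biNormalDensity ρ x y

/-- Inverse of the standard normal CDF. -/
noncomputable def stdNormalCDFInv : ℝ → ℝ := Function.invFun stdNormalCDF

noncomputable def gφ (x : ℝ) : ℝ := (1 / Real.sqrt (2 * Real.pi)) * Real.exp (-x ^ 2 / 2)

lemma sqrt2pi_pos : 0 < Real.sqrt (2 * Real.pi) := Real.sqrt_pos.mpr (by positivity)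

lemma gφ_pos (x : ℝ) : 0 < gφ x := by
  unfold gφ; positivity

lemma gφ_cont : Continuous gφ := by
  unfold gφ; fun_prop

lemma gφ_le (x : ℝ) : gφ x ≤ 1 / Real.sqrt (2 * Real.pi) := by
  unfold gφ
  have h1 : Real.exp (-x ^ 2 / 2) ≤ 1 := by
    rw [Real.exp_le_one_iff]; nlinarith [sq_nonneg x]
  nlinarith [sqrt2pi_pos, one_div_pos.mpr sqrt2pi_pos]

lemma integrable_gφ : MeasureTheory.Integrable gφ := by
  have : gφ = fun x => (1 / Real.sqrt (2 * Real.pi)) * Real.exp (-(1/2) * x ^ 2) := by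
    funext x; unfold gφ; ring_nf
  rw [this]
  exact (integrable_exp_neg_mul_sq (by norm_num : (0:ℝ) < 1/2)).const_mul _

lemma integral_gφ : ∫ x, gφ x = 1 := by
  unfold gφ
  rw [MeasureTheory.integral_const_mul]
  have : (fun x : ℝ => Real.exp (-x ^ 2 / 2)) = fun x => Real.exp (-(1/2) * x ^ 2) := by
    funext x; ring_nf
  rw [this, integral_gaussian (1/2)]
  have : Real.pi / (1/2) = 2 * Real.pi := by ring
  rw [this]
  field_simp

lemma Φ_eq (t : ℝ) : stdNormalCDF t = ∫ x in Set.Iic t, gφ x := rfl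

lemma Φ_hasDeriv (t : ℝ) : HasDerivAt stdNormalCDF (gφ t) t := by
  have h0 : ∀ u : ℝ, stdNormalCDF u = stdNormalCDF 0 + ∫ x in (0:ℝ)..u, gφ x := by
    intro u
    rw [Φ_eq, Φ_eq]
    have := intervalIntegral.integral_Iic_sub_Iic (integrable_gφ.integrableOn (s := Iic 0))
      (integrable_gφ.integrableOn (s := Iic u))
    linarith [this]
  have : HasDerivAt (fun u => stdNormalCDF 0 + ∫ x in (0:ℝ)..u, gφ x) (gφ t) t := by
    refine HasDerivAt.const_add _ ?_
    exact intervalIntegral.integral_hasDerivAt_right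
      (gφ_cont.intervalIntegrable _ _)
      (gφ_cont.stronglyMeasurableAtFilter _ _)
      gφ_cont.continuousAt
  exact (funext h0 : stdNormalCDF = _) ▸ this

lemma Φ_sub (a b : ℝ) : stdNormalCDF b - stdNormalCDF a = ∫ x in a..b, gφ x := by
  rw [Φ_eq, Φ_eq]
  exact intervalIntegral.integral_Iic_sub_Iic (integrable_gφ.integrableOn) (integrable_gφ.integrableOn)

lemma Φ_strictMono : StrictMono stdNormalCDF := by
  intro a b hab
  have h : 0 < ∫ x in a..b, gφ x :=
    intervalIntegral.intervalIntegral_pos_of_pos (gφ_cont.intervalIntegrable a b) (fun x => gφ_pos x) hab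
  have := Φ_sub a b
  linarith

lemma Φ_lip (a b : ℝ) : |stdNormalCDF b - stdNormalCDF a| ≤ (1 / Real.sqrt (2 * Real.pi)) * |b - a| := by
  rw [Φ_sub]
  have := intervalIntegral.norm_integral_le_of_norm_le_const (C := 1 / Real.sqrt (2 * Real.pi))
    (f := gφ) (a := a) (b := b) (fun x _ => by
      rw [Real.norm_eq_abs, abs_of_pos (gφ_pos x)]; exact gφ_le x)
  simpa [Real.norm_eq_abs, mul_comm] using this

lemma Φ_pos (t : ℝ) : 0 < stdNormalCDF t := by
  rw [Φ_eq]
  apply setIntegral_pos_iff_support_of_nonneg_ae ?_ ?_ |>.mpr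
  · have : (Function.support gφ) = univ := by
      ext x; simp [Function.support, (gφ_pos x).ne']
    simp [this]
  · exact Filter.Eventually.of_forall (fun x => (gφ_pos x).le)
  · exact integrable_gφ.integrableOn

lemma Φ_add_Ioi (t : ℝ) : stdNormalCDF t + ∫ x in Ioi t, gφ x = 1 := by
  rw [Φ_eq, intervalIntegral.integral_Iic_add_Ioi integrable_gφ.integrableOn integrable_gφ.integrableOn,
    integral_gφ]

lemma Φ_lt_one (t : ℝ) : stdNormalCDF t < 1 := by
  have h := Φ_add_Ioi t
  have hpos : 0 < ∫ x in Ioi t, gφ x := by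
    apply setIntegral_pos_iff_support_of_nonneg_ae ?_ ?_ |>.mpr
    · have : (Function.support gφ) = univ := by
        ext x; simp [Function.support, (gφ_pos x).ne']
      simp [this]
    · exact Filter.Eventually.of_forall (fun x => (gφ_pos x).le)
    · exact integrable_gφ.integrableOn
  linarith

lemma gφ_even (x : ℝ) : gφ (-x) = gφ x := by unfold gφ; ring_nf

lemma Φ_neg (t : ℝ) : stdNormalCDF (-t) = 1 - stdNormalCDF t := by
  have h1 : (∫ x in Ioi t, gφ x) = ∫ x in Iic (-t), gφ x := by
    rw [← integral_comp_neg_Ioi]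
    exact setIntegral_congr_fun measurableSet_Ioi (fun x _ => (gφ_even x).symm)
  have := Φ_add_Ioi t
  rw [h1, ← Φ_eq] at this
  linarith

lemma Φ_tendsto_atTop : Filter.Tendsto stdNormalCDF Filter.atTop (nhds 1) := by
  have h : Filter.Tendsto (fun t => ∫ x in (0:ℝ)..t, gφ x) Filter.atTop
      (nhds (∫ x in Ioi (0:ℝ), gφ x)) :=
    MeasureTheory.intervalIntegral_tendsto_integral_Ioi 0 integrable_gφ.integrableOn Filter.tendsto_id
  have heq : ∀ t, stdNormalCDF t = stdNormalCDF 0 + ∫ x in (0:ℝ)..t, gφ x := by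
    intro t; have := Φ_sub 0 t; linarith
  have h2 : stdNormalCDF 0 + ∫ x in Ioi (0:ℝ), gφ x = 1 := by
    have h3 : (∫ x in Ioi (0:ℝ), gφ x) = 1 - stdNormalCDF 0 := by
      have := Φ_add_Ioi 0; linarith
    rw [h3]; ring
  have h4 := (tendsto_const_nhds (x := stdNormalCDF 0) (f := Filter.atTop (α := ℝ))).add h
  rw [h2] at h4
  exact h4.congr (fun t => (heq t).symm)

lemma Φ_tendsto_atBot : Filter.Tendsto stdNormalCDF Filter.atBot (nhds 0) := by
  have h : Filter.Tendsto (fun t => ∫ x in t..(0:ℝ), gφ x) Filter.atBot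
      (nhds (∫ x in Iic (0:ℝ), gφ x)) :=
    MeasureTheory.intervalIntegral_tendsto_integral_Iic 0 integrable_gφ.integrableOn Filter.tendsto_id
  have heq : ∀ t, stdNormalCDF t = stdNormalCDF 0 - ∫ x in t..(0:ℝ), gφ x := by
    intro t; have := Φ_sub t 0; linarith
  have h4 := (tendsto_const_nhds (x := stdNormalCDF 0) (f := Filter.atBot (α := ℝ))).sub h
  rw [show stdNormalCDF 0 - ∫ x in Iic (0:ℝ), gφ x = 0 by rw [← Φ_eq]; ring] at h4
  exact h4.congr (fun t => (heq t).symm)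

lemma Φ_cont : Continuous stdNormalCDF :=
  continuous_iff_continuousAt.mpr (fun t => (Φ_hasDeriv t).continuousAt)

lemma Φ_surj {r : ℝ} (h0 : 0 < r) (h1 : r < 1) : ∃ c, stdNormalCDF c = r := by
  obtain ⟨a, ha⟩ := (Φ_tendsto_atBot.eventually_lt_const h0).exists
  obtain ⟨b, hb⟩ := (Φ_tendsto_atTop.eventually_const_lt h1).exists
  have hr : r ∈ Set.uIcc (stdNormalCDF a) (stdNormalCDF b) := by
    rw [Set.mem_uIcc]; left; exact ⟨ha.le, hb.le⟩
  obtain ⟨c, _, hc⟩ := intermediate_value_uIcc (Φ_cont.continuousOn) hr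
  exact ⟨c, hc⟩

lemma integrable_gφ_affine {s : ℝ} (hs : s ≠ 0) (m : ℝ) :
    MeasureTheory.Integrable (fun y => gφ ((y - m)/s)) := by
  have h1 : MeasureTheory.Integrable (fun y : ℝ => gφ (y / s)) := by
    simpa [div_eq_mul_inv] using integrable_gφ.comp_mul_right' (inv_ne_zero hs)
  simpa using h1.comp_sub_right m

lemma integral_Iic_gφ_affine {s : ℝ} (hs : 0 < s) (m c : ℝ) :
    ∫ y in Iic c, gφ ((y - m)/s) = s * stdNormalCDF ((c - m)/s) := by
  have key : ∀ a : ℝ, ∫ y in a..c, gφ ((y - m)/s) = s * ∫ u in (a-m)/s..(c-m)/s, gφ u := by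
    intro a
    rw [intervalIntegral.integral_comp_sub_right (fun y => gφ (y / s)) m,
      intervalIntegral.integral_comp_div (f := gφ) hs.ne', smul_eq_mul]
  have hmono : Filter.Tendsto (fun a : ℝ => (a - m)/s) Filter.atBot Filter.atBot := by
    apply Filter.Tendsto.atBot_div_const hs
    exact Filter.tendsto_atBot_add_const_right _ _ Filter.tendsto_id
  have lim1 : Filter.Tendsto (fun a => ∫ y in a..c, gφ ((y - m)/s)) Filter.atBot
      (nhds (∫ y in Iic c, gφ ((y - m)/s))) :=
    MeasureTheory.intervalIntegral_tendsto_integral_Iic c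
      ((integrable_gφ_affine hs.ne' m).integrableOn) Filter.tendsto_id
  have lim2 : Filter.Tendsto (fun a => s * ∫ u in (a-m)/s..(c-m)/s, gφ u) Filter.atBot
      (nhds (s * ∫ u in Iic ((c-m)/s), gφ u)) :=
    (MeasureTheory.intervalIntegral_tendsto_integral_Iic _
      integrable_gφ.integrableOn hmono).const_mul s
  rw [Φ_eq]
  exact tendsto_nhds_unique (lim1.congr (fun a => key a)) lim2

section density
variable {ρ : ℝ} (hρ : ρ ∈ Set.Ioo (0:ℝ) 1)

lemma s_pos (hρ : ρ ∈ Set.Ioo (0:ℝ) 1) : 0 < Real.sqrt (1 - ρ^2) := by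
  apply Real.sqrt_pos.mpr; nlinarith [hρ.1, hρ.2]

lemma s_sq (hρ : ρ ∈ Set.Ioo (0:ℝ) 1) : (Real.sqrt (1 - ρ^2))^2 = 1 - ρ^2 :=
  Real.sq_sqrt (by nlinarith [hρ.1, hρ.2])

lemma density_factor (hρ : ρ ∈ Set.Ioo (0:ℝ) 1) (x y : ℝ) :
    biNormalDensity ρ x y = gφ x * (gφ ((y - ρ*x)/Real.sqrt (1 - ρ^2)) / Real.sqrt (1 - ρ^2)) := by
  set s := Real.sqrt (1 - ρ^2) with hsdef
  have hs : 0 < s := s_pos hρ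
  have hs2 : s^2 = 1 - ρ^2 := s_sq hρ
  unfold biNormalDensity gφ
  have h1ρ : (1:ℝ) - ρ^2 ≠ 0 := by nlinarith [hρ.1, hρ.2]
  have hsq : Real.sqrt (2*Real.pi) * Real.sqrt (2*Real.pi) = 2 * Real.pi :=
    Real.mul_self_sqrt (by positivity)
  have hexp : Real.exp (-x^2/2) * Real.exp (-((y - ρ*x)/s)^2/2)
      = Real.exp (-(x ^ 2 - 2 * ρ * x * y + y ^ 2) / (2 * (1 - ρ ^ 2))) := by
    rw [← Real.exp_add]
    congr 1
    rw [div_pow, hs2]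
    field_simp
    ring
  have hconst : 1 / Real.sqrt (2*Real.pi) * Real.exp (-x ^ 2 / 2) *
      (1 / Real.sqrt (2*Real.pi) * Real.exp (-((y - ρ * x) / s) ^ 2 / 2) / s)
      = 1 / (2 * Real.pi * s) * (Real.exp (-x^2/2) * Real.exp (-((y - ρ*x)/s)^2/2)) := by
    rw [← hsq]
    have hs2pi : Real.sqrt (2*Real.pi) ≠ 0 := by positivity
    field_simp
    ring
    rw [Real.sqrt_sq (Real.sqrt_nonneg _)]
  symm
  rw [hconst, hexp]
end density

section reps
variable {ρ : ℝ}

lemma inner_integral (hρ : ρ ∈ Set.Ioo (0:ℝ) 1) (x c : ℝ) :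
    ∫ y in Iic c, biNormalDensity ρ x y
      = gφ x * stdNormalCDF ((c - ρ*x)/Real.sqrt (1 - ρ^2)) := by
  set s := Real.sqrt (1 - ρ^2) with hsdef
  have hs : 0 < s := s_pos hρ
  have h1 : ∫ y in Iic c, biNormalDensity ρ x y
      = ∫ y in Iic c, (gφ x / s) * gφ ((y - ρ*x)/s) := by
    refine setIntegral_congr_fun measurableSet_Iic (fun y _ => ?_)
    rw [density_factor hρ]
    ring
  rw [h1, MeasureTheory.integral_const_mul, integral_Iic_gφ_affine hs]
  field_simp

lemma density_symm (ρ x y : ℝ) : biNormalDensity ρ x y = biNormalDensity ρ y x := by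
  unfold biNormalDensity; ring_nf

lemma density_cont (ρ : ℝ) : Continuous (fun p : ℝ × ℝ => biNormalDensity ρ p.1 p.2) := by
  unfold biNormalDensity; fun_prop

lemma density_nonneg (ρ x y : ℝ) : 0 ≤ biNormalDensity ρ x y := by
  unfold biNormalDensity; positivity

lemma integrable_density (hρ : ρ ∈ Set.Ioo (0:ℝ) 1) (t₁ t₂ : ℝ) :
    MeasureTheory.Integrable (fun p : ℝ × ℝ => biNormalDensity ρ p.1 p.2)
      ((volume.restrict (Iic t₁)).prod (volume.restrict (Iic t₂))) := by
  have hglobal : MeasureTheory.Integrable (fun p : ℝ × ℝ => biNormalDensity ρ p.1 p.2)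
      ((volume : Measure ℝ).prod volume) := by
    set c : ℝ := (2 * (1 + ρ))⁻¹ with hcdef
    have h1ρ' : (0:ℝ) < 1 + ρ := by nlinarith [hρ.1]
    have hcpos : 0 < c := by rw [hcdef]; positivity
    have hbound : MeasureTheory.Integrable
        (fun p : ℝ × ℝ => ((1 / (2 * Real.pi * Real.sqrt (1 - ρ^2))) * Real.exp (-c * p.1^2))
          * Real.exp (-c * p.2^2)) ((volume : Measure ℝ).prod volume) :=
      ((integrable_exp_neg_mul_sq hcpos).const_mul _).mul_prod (integrable_exp_neg_mul_sq hcpos)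
    refine hbound.mono' ((density_cont ρ).aestronglyMeasurable) ?_
    refine Filter.Eventually.of_forall (fun p => ?_)
    rw [Real.norm_eq_abs, abs_of_nonneg (density_nonneg ρ p.1 p.2)]
    have h1ρ : (0:ℝ) < 1 - ρ^2 := by nlinarith [hρ.1, hρ.2]
    have hC : 0 ≤ 1 / (2 * Real.pi * Real.sqrt (1 - ρ^2)) := by positivity
    have hmul : (-c * p.1^2 + -c * p.2^2) * (2 * (1 - ρ^2)) = -(p.1^2+p.2^2)*(1-ρ) := by
      rw [hcdef]; field_simp; ring
    have hkey : 0 ≤ ρ * (p.1 - p.2)^2 := mul_nonneg hρ.1.le (sq_nonneg _)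
    have hEle : -(p.1 ^ 2 - 2 * ρ * p.1 * p.2 + p.2 ^ 2) / (2 * (1 - ρ ^ 2))
        ≤ -c * p.1^2 + -c * p.2^2 := by
      rw [div_le_iff₀ (by positivity : (0:ℝ) < 2*(1-ρ^2)), hmul]
      nlinarith [hkey]
    have hrhs : (1 / (2 * Real.pi * Real.sqrt (1 - ρ^2))) * Real.exp (-c * p.1^2)
        * Real.exp (-c * p.2^2)
        = (1 / (2 * Real.pi * Real.sqrt (1 - ρ^2))) * Real.exp (-c * p.1^2 + -c * p.2^2) := by
      rw [mul_assoc, ← Real.exp_add]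
    show (1 / (2 * Real.pi * Real.sqrt (1 - ρ^2))) *
        Real.exp (-(p.1 ^ 2 - 2 * ρ * p.1 * p.2 + p.2 ^ 2) / (2 * (1 - ρ ^ 2))) ≤ _
    rw [hrhs]
    exact mul_le_mul_of_nonneg_left (Real.exp_le_exp.mpr hEle) hC
  rw [MeasureTheory.Measure.prod_restrict]
  exact hglobal.restrict

lemma biNormalCDF_def (hρ : ρ ∈ Set.Ioo (0:ℝ) 1) (t₁ t₂ : ℝ) :
    biNormalCDF ρ t₁ t₂ = ∫ x in Iic t₁, ∫ y in Iic t₂, biNormalDensity ρ x y := by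
  unfold biNormalCDF
  rw [if_neg (by linarith [hρ.2] : ρ ≠ 1), if_neg (by nlinarith [hρ.1] : ρ ≠ -1)]

lemma biNormalCDF_rep1 (hρ : ρ ∈ Set.Ioo (0:ℝ) 1) (t₁ t₂ : ℝ) :
    biNormalCDF ρ t₁ t₂
      = ∫ x in Iic t₁, gφ x * stdNormalCDF ((t₂ - ρ*x)/Real.sqrt (1 - ρ^2)) := by
  rw [biNormalCDF_def hρ]
  exact setIntegral_congr_fun measurableSet_Iic (fun x _ => inner_integral hρ x t₂)

lemma biNormalCDF_rep2 (hρ : ρ ∈ Set.Ioo (0:ℝ) 1) (t₁ t₂ : ℝ) :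
    biNormalCDF ρ t₁ t₂
      = ∫ y in Iic t₂, gφ y * stdNormalCDF ((t₁ - ρ*y)/Real.sqrt (1 - ρ^2)) := by
  rw [biNormalCDF_def hρ,
    MeasureTheory.integral_integral_swap (integrable_density hρ t₁ t₂)]
  refine setIntegral_congr_fun measurableSet_Iic (fun y _ => ?_)
  rw [show (∫ x in Iic t₁, biNormalDensity ρ x y) = ∫ x in Iic t₁, biNormalDensity ρ y x from
    setIntegral_congr_fun measurableSet_Iic (fun x _ => density_symm ρ x y)]
  exact inner_integral hρ y t₁
end reps

section deriv
variable {ρ : ℝ}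

lemma cont_k (b c d : ℝ) : Continuous (fun x : ℝ => gφ x * stdNormalCDF ((b - c*x)/d)) := by
  exact gφ_cont.mul (Φ_cont.comp (by fun_prop))

lemma integrable_k (b c d : ℝ) :
    MeasureTheory.Integrable (fun x : ℝ => gφ x * stdNormalCDF ((b - c*x)/d)) := by
  refine integrable_gφ.mono' (cont_k b c d).aestronglyMeasurable ?_
  refine Filter.Eventually.of_forall (fun x => ?_)
  rw [Real.norm_eq_abs, abs_mul, abs_of_pos (gφ_pos x), abs_of_pos (Φ_pos _)]
  nlinarith [gφ_pos x, Φ_lt_one ((b - c*x)/d), Φ_pos ((b - c*x)/d)]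

lemma hasDerivAt_of_sq_bound (f : ℝ → ℝ) (t₀ C : ℝ)
    (hb : ∀ t, |f t| ≤ C * |t - t₀|^2) : HasDerivAt f 0 t₀ := by
  have hC : 0 ≤ C := by
    have h0 := hb (t₀ + 1)
    have := abs_nonneg (f (t₀ + 1))
    simp at h0
    linarith
  have hf0 : f t₀ = 0 := by
    have := hb t₀; simp at this; exact this
  rw [hasDerivAt_iff_isLittleO, Asymptotics.isLittleO_iff]
  intro ε hε
  have hball := Metric.ball_mem_nhds t₀ (show (0:ℝ) < ε/(C+1) by positivity)
  filter_upwards [hball] with t ht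
  rw [Metric.mem_ball, Real.dist_eq] at ht
  have h1 := hb t
  rw [hf0]
  simp only [smul_zero, sub_zero, Real.norm_eq_abs]
  have habs : (0:ℝ) ≤ |t - t₀| := abs_nonneg _
  have e1 : |f t| ≤ C * |t - t₀| * |t - t₀| := by nlinarith [h1]
  have e2 : C * |t - t₀| * |t - t₀| ≤ C * (ε/(C+1)) * |t - t₀| :=
    mul_le_mul_of_nonneg_right (mul_le_mul_of_nonneg_left ht.le hC) habs
  have e3 : C * (ε/(C+1)) * |t - t₀| ≤ ε * |t - t₀| := by
    apply mul_le_mul_of_nonneg_right _ habs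
    rw [mul_div_assoc', div_le_iff₀ (by positivity : (0:ℝ) < C + 1)]
    nlinarith
  linarith

lemma Psi_eq (hρ : ρ ∈ Set.Ioo (0:ℝ) 1) (t₀ t : ℝ) : biNormalCDF ρ t (-t) = biNormalCDF ρ t₀ (-t₀)
    + (∫ x in t₀..t, gφ x * stdNormalCDF ((-t - ρ*x)/Real.sqrt (1 - ρ^2)))
    + (∫ y in (-t₀)..(-t), gφ y * stdNormalCDF ((t₀ - ρ*y)/Real.sqrt (1 - ρ^2))) := by
  have e1 : biNormalCDF ρ t (-t) - biNormalCDF ρ t₀ (-t)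
      = ∫ x in t₀..t, gφ x * stdNormalCDF ((-t - ρ*x)/Real.sqrt (1 - ρ^2)) := by
    rw [biNormalCDF_rep1 hρ t (-t), biNormalCDF_rep1 hρ t₀ (-t)]
    exact intervalIntegral.integral_Iic_sub_Iic
      (integrable_k _ _ _).integrableOn (integrable_k _ _ _).integrableOn
  have e2 : biNormalCDF ρ t₀ (-t) - biNormalCDF ρ t₀ (-t₀)
      = ∫ y in (-t₀)..(-t), gφ y * stdNormalCDF ((t₀ - ρ*y)/Real.sqrt (1 - ρ^2)) := by
    rw [biNormalCDF_rep2 hρ t₀ (-t), biNormalCDF_rep2 hρ t₀ (-t₀)]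
    exact intervalIntegral.integral_Iic_sub_Iic
      (integrable_k _ _ _).integrableOn (integrable_k _ _ _).integrableOn
  linarith

lemma hasDerivAt_Psi (hρ : ρ ∈ Set.Ioo (0:ℝ) 1) (t₀ : ℝ) :
    HasDerivAt (fun t => biNormalCDF ρ t (-t))
      (gφ t₀ * (1 - 2 * stdNormalCDF (((1+ρ)/Real.sqrt (1 - ρ^2)) * t₀))) t₀ := by
  set s := Real.sqrt (1 - ρ^2) with hsdef
  have hs : 0 < s := s_pos hρ
  set k : ℝ → ℝ → ℝ := fun b x => gφ x * stdNormalCDF ((-b - ρ*x)/s) with hk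
  set m : ℝ → ℝ := fun y => gφ y * stdNormalCDF ((t₀ - ρ*y)/s) with hm
  -- the three pieces
  set A : ℝ → ℝ := fun t => ∫ x in t₀..t, k t x with hA
  set A₀ : ℝ → ℝ := fun t => ∫ x in t₀..t, k t₀ x with hA₀
  set B : ℝ → ℝ := fun t => ∫ y in (-t₀)..(-t), m y with hB
  have hfun : (fun t => biNormalCDF ρ t (-t))
      = fun t => biNormalCDF ρ t₀ (-t₀) + (A₀ t + (A t - A₀ t)) + B t := by
    funext t
    have := Psi_eq hρ t₀ t
    rw [hA, hA₀, hB, hk, hm]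
    simpa using this
  rw [hfun]
  have hDA₀ : HasDerivAt A₀ (k t₀ t₀) t₀ := by
    rw [hA₀]
    exact intervalIntegral.integral_hasDerivAt_right
      ((cont_k _ _ _).intervalIntegrable _ _)
      ((cont_k _ _ _).stronglyMeasurableAtFilter _ _)
      (cont_k _ _ _).continuousAt
  have hDB : HasDerivAt B (-(m (-t₀))) t₀ := by
    have h1 : HasDerivAt (fun u => ∫ y in (-t₀)..u, m y) (m (-t₀)) (-t₀) :=
      intervalIntegral.integral_hasDerivAt_right
        ((cont_k _ _ _).intervalIntegrable _ _)
        ((cont_k _ _ _).stronglyMeasurableAtFilter _ _)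
        (cont_k _ _ _).continuousAt
    have h2 := h1.comp t₀ (hasDerivAt_neg t₀)
    rw [hB, show -(m (-t₀)) = m (-t₀) * -1 by ring]; exact h2
  have hDE : HasDerivAt (fun t => A t - A₀ t) 0 t₀ := by
    apply hasDerivAt_of_sq_bound _ t₀ ((1 / Real.sqrt (2 * Real.pi))^2 / s)
    intro t
    have hsub : A t - A₀ t = ∫ x in t₀..t, (k t x - k t₀ x) := by
      rw [hA, hA₀]
      exact (intervalIntegral.integral_sub ((cont_k _ _ _).intervalIntegrable _ _)
        ((cont_k _ _ _).intervalIntegrable _ _)).symm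
    rw [hsub]
    have hbd : ∀ x ∈ Set.uIoc t₀ t, ‖k t x - k t₀ x‖
        ≤ (1 / Real.sqrt (2 * Real.pi))^2 / s * |t - t₀| := by
      intro x _
      rw [hk]
      simp only
      rw [show gφ x * stdNormalCDF ((-t - ρ*x)/s) - gφ x * stdNormalCDF ((-t₀ - ρ*x)/s)
        = gφ x * (stdNormalCDF ((-t - ρ*x)/s) - stdNormalCDF ((-t₀ - ρ*x)/s)) by ring]
      rw [Real.norm_eq_abs, abs_mul, abs_of_pos (gφ_pos x)]
      have h1 : |stdNormalCDF ((-t - ρ*x)/s) - stdNormalCDF ((-t₀ - ρ*x)/s)|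
          ≤ (1 / Real.sqrt (2 * Real.pi)) * (|t - t₀| / s) := by
        have := Φ_lip ((-t₀ - ρ*x)/s) ((-t - ρ*x)/s)
        have harg : |(-t - ρ*x)/s - (-t₀ - ρ*x)/s| = |t - t₀| / s := by
          rw [div_sub_div_same, abs_div, abs_of_pos hs]
          congr 1
          rw [show -t - ρ*x - (-t₀ - ρ*x) = -(t - t₀) by ring, abs_neg]
        rw [harg] at this
        exact this
      calc gφ x * |stdNormalCDF ((-t - ρ*x)/s) - stdNormalCDF ((-t₀ - ρ*x)/s)|
          ≤ (1 / Real.sqrt (2 * Real.pi)) * ((1 / Real.sqrt (2 * Real.pi)) * (|t - t₀| / s)) := by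
            apply mul_le_mul (gφ_le x) h1 (abs_nonneg _)
            positivity
        _ = (1 / Real.sqrt (2 * Real.pi))^2 / s * |t - t₀| := by ring
    have := intervalIntegral.norm_integral_le_of_norm_le_const hbd
    rw [Real.norm_eq_abs] at this
    calc |∫ x in t₀..t, (k t x - k t₀ x)|
        ≤ (1 / Real.sqrt (2 * Real.pi))^2 / s * |t - t₀| * |t - t₀| := this
      _ = (1 / Real.sqrt (2 * Real.pi))^2 / s * |t - t₀|^2 := by ring
  have htotal := ((hasDerivAt_const t₀ (biNormalCDF ρ t₀ (-t₀))).add (hDA₀.add hDE)).add hDB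
  have hval : biNormalCDF ρ t₀ (-t₀) * 0 + (k t₀ t₀ + 0) + -(m (-t₀))
      = gφ t₀ * (1 - 2 * stdNormalCDF (((1+ρ)/s) * t₀)) := by
    rw [hk, hm]
    simp only
    rw [gφ_even t₀]
    have harg1 : (-t₀ - ρ*t₀)/s = -(((1+ρ)/s) * t₀) := by ring
    have harg2 : (t₀ - ρ*(-t₀))/s = ((1+ρ)/s) * t₀ := by ring
    rw [harg1, harg2, Φ_neg]
    ring
  refine htotal.congr_deriv ?_
  rw [hk, hm]
  simp only
  rw [gφ_even t₀]
  have harg1 : (-t₀ - ρ*t₀)/s = -(((1+ρ)/s) * t₀) := by ring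
  have harg2 : (t₀ - ρ*(-t₀))/s = ((1+ρ)/s) * t₀ := by ring
  rw [harg1, harg2, Φ_neg]
  ring
end deriv

/-- Let `h(t₂) = p₂·Φ(t₂) + p₁·Φ_{-ρ₁}(t₂, -t₂)` be the soundness when `t₁ = -∞`.
For `ρ₁ ∈ (-1,0)` and `p₁ > p₂ > 0` with `2p₁ + p₂ = 1`, `h` is maximized at
`t* = √((1+ρ₁)/(1-ρ₁))·Φ⁻¹((p₁+p₂)/(2p₁))`: its derivative is positive before `t*`
and negative after `t*`. -/
theorem boundary_soundness_max (ρ₁ p₁ p₂ : ℝ) (hρ₁ : ρ₁ ∈ Set.Ioo (-1 : ℝ) 0)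
    (hp : p₂ < p₁) (hp₂ : 0 < p₂) (hsum : 2 * p₁ + p₂ = 1) :
    (∀ t₂ < Real.sqrt ((1 + ρ₁) / (1 - ρ₁)) * stdNormalCDFInv ((p₁ + p₂) / (2 * p₁)),
      0 < deriv (fun t => p₂ * stdNormalCDF t + p₁ * biNormalCDF (-ρ₁) t (-t)) t₂) ∧
    (∀ t₂, Real.sqrt ((1 + ρ₁) / (1 - ρ₁)) * stdNormalCDFInv ((p₁ + p₂) / (2 * p₁)) < t₂ →
      deriv (fun t => p₂ * stdNormalCDF t + p₁ * biNormalCDF (-ρ₁) t (-t)) t₂ < 0) := by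
  obtain ⟨hρa, hρb⟩ := hρ₁
  have hρ : -ρ₁ ∈ Set.Ioo (0:ℝ) 1 := ⟨by linarith, by linarith⟩
  have hp₁ : 0 < p₁ := lt_trans hp₂ hp
  -- the slope factor
  set a : ℝ := (1 + -ρ₁)/Real.sqrt (1 - (-ρ₁)^2) with hadef
  set w : ℝ := Real.sqrt ((1 + ρ₁) / (1 - ρ₁)) with hwdef
  have hu : (0:ℝ) < 1 + ρ₁ := by linarith
  have hv : (0:ℝ) < 1 - ρ₁ := by linarith
  have hsq : (1 : ℝ) - (-ρ₁)^2 = (1 - ρ₁) * (1 + ρ₁) := by ring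
  have hsqrt_mul : Real.sqrt (1 - (-ρ₁)^2) = Real.sqrt (1 - ρ₁) * Real.sqrt (1 + ρ₁) := by
    rw [hsq, Real.sqrt_mul hv.le]
  have hw : w = Real.sqrt (1 + ρ₁) / Real.sqrt (1 - ρ₁) := by
    rw [hwdef, Real.sqrt_div hu.le]
  have ha : a = Real.sqrt (1 - ρ₁) / Real.sqrt (1 + ρ₁) := by
    rw [hadef, hsqrt_mul]
    rw [show (1 : ℝ) + -ρ₁ = Real.sqrt (1 - ρ₁) * Real.sqrt (1 - ρ₁) by
      rw [Real.mul_self_sqrt hv.le]; ring]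
    rw [div_eq_div_iff (by positivity) (by positivity)]
    ring
  have hapos : 0 < a := by rw [ha]; positivity
  have haw : a * w = 1 := by
    rw [ha, hw]
    field_simp
  -- the inverse CDF value
  set r : ℝ := (p₁ + p₂) / (2 * p₁) with hrdef
  have hr0 : 0 < r := by positivity
  have hr1 : r < 1 := by
    rw [hrdef, div_lt_one (by positivity)]; linarith
  obtain ⟨c₀, hc₀⟩ := Φ_surj hr0 hr1
  have hinv : stdNormalCDF (stdNormalCDFInv r) = r :=
    Function.invFun_eq ⟨c₀, hc₀⟩
  set c : ℝ := stdNormalCDFInv r with hcdef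
  -- derivative formula
  have hderiv : ∀ t : ℝ, deriv (fun t => p₂ * stdNormalCDF t + p₁ * biNormalCDF (-ρ₁) t (-t)) t
      = gφ t * ((p₂ + p₁) - 2 * p₁ * stdNormalCDF (a * t)) := by
    intro t
    have h1 := ((Φ_hasDeriv t).const_mul p₂).add ((hasDerivAt_Psi hρ t).const_mul p₁)
    rw [show (fun t => p₂ * stdNormalCDF t + p₁ * biNormalCDF (-ρ₁) t (-t)) = ((fun y => p₂ * stdNormalCDF y) + fun y => p₁ * biNormalCDF (-ρ₁) y (-y)) from rfl, h1.deriv]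
    ring
  constructor
  · intro t ht
    rw [hderiv t]
    have hat : a * t < c := by
      have := mul_lt_mul_of_pos_left ht hapos
      rw [show a * (w * c) = (a * w) * c by ring, haw, one_mul] at this
      exact this
    have hΦ : stdNormalCDF (a * t) < r := hinv ▸ Φ_strictMono hat
    have : 0 < (p₂ + p₁) - 2 * p₁ * stdNormalCDF (a * t) := by
      have h2 : 2 * p₁ * stdNormalCDF (a * t) < 2 * p₁ * r := by
        apply mul_lt_mul_of_pos_left hΦ (by positivity)
      have h3 : 2 * p₁ * r = p₁ + p₂ := by
        rw [hrdef]; field_simp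
      linarith
    exact mul_pos (gφ_pos t) this
  · intro t ht
    rw [hderiv t]
    have hat : c < a * t := by
      have := mul_lt_mul_of_pos_left ht hapos
      rw [show a * (w * c) = (a * w) * c by ring, haw, one_mul] at this
      exact this
    have hΦ : r < stdNormalCDF (a * t) := hinv ▸ Φ_strictMono hat
    have hneg : (p₂ + p₁) - 2 * p₁ * stdNormalCDF (a * t) < 0 := by
      have h2 : 2 * p₁ * r < 2 * p₁ * stdNormalCDF (a * t) :=
        mul_lt_mul_of_pos_left hΦ (by positivity)
      have h3 : 2 * p₁ * r = p₁ + p₂ := by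
        rw [hrdef]; field_simp
      linarith
    exact mul_neg_of_pos_of_neg (gφ_pos t) hneg
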